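/- With notation as in the previous lemma (finite-dimensional filtered k-vector spaces M_i, 0 ≤ i ≤ f-1, with three-step filtrations, and Fil^k M = ⊗_i Fil^{k_i} M_i for k ∈ {0,1,2}^f), for any subsets I, I' ⊆ {0,1,2}^f one has (Σ_{k∈I} Fil^k M) ∩ (Σ_{k'∈I'} Fil^{k'} M) = Σ_{k∈I, k'∈I'} (Fil^k M ∩ Fil^{k'} M). -/

import Mathlib

open scoped TensorProduct

namespace TensorFil11

variable {𝕜 : Type*} [Field 𝕜] {f : ℕ}
variable (𝕜) (M : Fin f → Type*) [∀ i, AddCommGroup (M i)] [∀ i, Module 𝕜 (M i)]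

/-- `Fil^k M = ⊗_i Fil^{k_i} M_i ⊆ M = ⊗_i M_i`. -/
noncomputable def filT (F : ∀ i, ℕ → Submodule 𝕜 (M i)) (k : Fin f → ℕ) :
    Submodule 𝕜 (⨂[𝕜] i, M i) :=
  LinearMap.range (PiTensorProduct.map fun i => (F i (k i)).subtype)

/-- For a linearly independent family, spans of subfamilies intersect as expected. -/
theorem span_image_inf {V ι : Type*} [AddCommGroup V] [Module 𝕜 V] {v : ι → V}
    (hv : LinearIndependent 𝕜 v) (s t : Set ι) :
    Submodule.span 𝕜 (v '' s) ⊓ Submodule.span 𝕜 (v '' t) =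
      Submodule.span 𝕜 (v '' (s ∩ t)) := by
  have hs : v '' s = v '' (s ∩ t) ∪ v '' (s \ t) := by
    rw [← Set.image_union, Set.inter_union_diff]
  have ht : v '' t = v '' (s ∩ t) ∪ v '' (t \ s) := by
    rw [← Set.image_union, Set.inter_comm, Set.inter_union_diff]
  rw [hs, ht, Submodule.span_union, Submodule.span_union,
    sup_inf_assoc_of_le _ le_sup_left]
  have hd : Disjoint (Submodule.span 𝕜 (v '' (s \ t)))
      (Submodule.span 𝕜 (v '' (s ∩ t)) ⊔ Submodule.span 𝕜 (v '' (t \ s))) := by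
    rw [← Submodule.span_union, ← Set.image_union]
    refine hv.disjoint_span_image ?_
    refine Set.disjoint_sdiff_left.mono_right ?_
    exact Set.union_subset Set.inter_subset_right Set.diff_subset
  rw [disjoint_iff.mp hd, sup_bot_eq]

/-- Tensor products of basis vectors are linearly independent. -/
theorem li_tprod {ι : Fin f → Type*} (b : ∀ i, Module.Basis (ι i) 𝕜 (M i)) :
    LinearIndependent 𝕜
      (fun x : ∀ i, ι i => PiTensorProduct.tprod 𝕜 fun i => b i (x i)) := by
  classical
  rw [linearIndependent_iff']
  intro s g hsum x hx
  set L : (⨂[𝕜] i, M i) →ₗ[𝕜] 𝕜 :=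
    PiTensorProduct.lift ((MultilinearMap.mkPiAlgebra 𝕜 (Fin f) 𝕜).compLinearMap
      fun i => (b i).coord (x i)) with hLdef
  have hL : ∀ y : ∀ i, ι i,
      L (PiTensorProduct.tprod 𝕜 fun i => b i (y i)) = if y = x then 1 else 0 := by
    intro y
    have h1 : L (PiTensorProduct.tprod 𝕜 fun i => b i (y i)) =
        ∏ i, (b i).coord (x i) ((b i) (y i)) := by
      rw [hLdef, PiTensorProduct.lift.tprod, MultilinearMap.compLinearMap_apply,
        MultilinearMap.mkPiAlgebra_apply]
    rw [h1]
    by_cases h : y = x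
    · subst h
      simp [Module.Basis.coord_apply, Module.Basis.repr_self]
    · obtain ⟨i, hi⟩ := Function.ne_iff.mp h
      rw [if_neg h]
      refine Finset.prod_eq_zero (Finset.mem_univ i) ?_
      simp [Module.Basis.coord_apply, Module.Basis.repr_self, Finsupp.single_apply, hi]
  have h2 := congrArg L hsum
  rw [map_sum, map_zero] at h2
  simp only [map_smul, hL, smul_eq_mul, mul_ite, mul_one, mul_zero] at h2
  rwa [Finset.sum_ite_eq' s x g, if_pos hx] at h2

/-- `filT` is spanned by tensor products of adapted spanning vectors. -/
theorem filT_eq_span (F : ∀ i, ℕ → Submodule 𝕜 (M i)) (k : Fin f → ℕ)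
    {ι : Fin f → Type*} (b : ∀ i, ι i → M i) (P : ∀ i, Set (ι i))
    (h : ∀ i, F i (k i) = Submodule.span 𝕜 (b i '' P i)) :
    filT 𝕜 M F k = Submodule.span 𝕜
      ((fun x : ∀ i, ι i => PiTensorProduct.tprod 𝕜 fun i => b i (x i)) ''
        {x | ∀ i, x i ∈ P i}) := by
  classical
  rw [filT, PiTensorProduct.map_range_eq_span_tprod]
  have key : ∀ (A : Finset (Fin f)) (m : ∀ i, M i), (∀ i, m i ∈ F i (k i)) →
      (∀ i, i ∉ A → m i ∈ b i '' P i) →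
      PiTensorProduct.tprod 𝕜 m ∈ Submodule.span 𝕜
        ((fun x : ∀ i, ι i => PiTensorProduct.tprod 𝕜 fun i => b i (x i)) ''
          {x | ∀ i, x i ∈ P i}) := by
    intro A
    induction A using Finset.induction_on with
    | empty =>
      intro m _ h0
      choose x hxP hbx using fun i => h0 i (Finset.notMem_empty i)
      exact Submodule.subset_span ⟨x, hxP, congrArg (PiTensorProduct.tprod 𝕜) (funext hbx)⟩
    | @insert a A ha IH =>
      intro m hm h0
      have hma : m a ∈ Submodule.span 𝕜 (b a '' P a) := (h a) ▸ hm a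
      have hupd : ∀ y ∈ Submodule.span 𝕜 (b a '' P a),
          PiTensorProduct.tprod 𝕜 (Function.update m a y) ∈ Submodule.span 𝕜
          ((fun x : ∀ i, ι i => PiTensorProduct.tprod 𝕜 fun i => b i (x i)) ''
            {x | ∀ i, x i ∈ P i}) := by
        intro y hy
        induction hy using Submodule.span_induction with
        | mem z hz =>
          obtain ⟨j, hj, rfl⟩ := hz
          refine IH (Function.update m a (b a j)) ?_ ?_
          · intro i
            rcases eq_or_ne i a with rfl | hia
            · rw [Function.update_self]
              exact (h i).symm ▸ Submodule.subset_span ⟨j, hj, rfl⟩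
            · rw [Function.update_of_ne hia]; exact hm i
          · intro i hiA
            rcases eq_or_ne i a with rfl | hia
            · rw [Function.update_self]; exact ⟨j, hj, rfl⟩
            · rw [Function.update_of_ne hia]
              exact h0 i (by simp [Finset.mem_insert, hia, hiA])
        | zero =>
          rw [MultilinearMap.map_update_zero]
          exact Submodule.zero_mem _
        | add u w hu hw pu pw =>
          rw [MultilinearMap.map_update_add]
          exact Submodule.add_mem _ pu pw
        | smul c u hu pu =>
          rw [MultilinearMap.map_update_smul]
          exact Submodule.smul_mem _ _ pu
      have := hupd (m a) hma
      rwa [Function.update_eq_self] at this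
  apply le_antisymm
  · rw [Submodule.span_le]
    rintro t ⟨m, rfl⟩
    exact key Finset.univ (fun i => ↑(m i)) (fun i => (m i).2)
      (fun i hi => absurd (Finset.mem_univ i) hi)
  · rw [Submodule.span_le]
    rintro t ⟨x, hxmem, rfl⟩
    exact Submodule.subset_span
      ⟨fun i => ⟨b i (x i), (h i).symm ▸ Submodule.subset_span ⟨x i, hxmem i, rfl⟩⟩, rfl⟩

/-- Lemma 3.10: for subsets `I, I' ⊆ {0,1,2}^f` one has
`(Σ_{k∈I} Fil^k M) ∩ (Σ_{k'∈I'} Fil^{k'} M) = Σ_{k∈I,k'∈I'} (Fil^k M ∩ Fil^{k'} M)`. -/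
theorem filI_inf_filI (F : ∀ i, ℕ → Submodule 𝕜 (M i))
    [∀ i, FiniteDimensional 𝕜 (M i)]
    (hF : ∀ i, Antitone (F i)) (hF0 : ∀ i, F i 0 = ⊤) (hF3 : ∀ i, F i 3 = ⊥)
    (I I' : Finset (Fin f → ℕ))
    (hI : ∀ k ∈ I, ∀ i, k i ≤ 2) (hI' : ∀ k ∈ I', ∀ i, k i ≤ 2) :
    (I.sup fun k => filT 𝕜 M F k) ⊓ (I'.sup fun k => filT 𝕜 M F k) =
      (I ×ˢ I').sup fun kk => filT 𝕜 M F kk.1 ⊓ filT 𝕜 M F kk.2 := by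
  classical
  -- Step 1: adapted spanning sets for the flag `F i 2 ≤ F i 1 ≤ F i 0 = ⊤`
  have hexists : ∀ i, ∃ S : ℕ → Set (M i),
      (∀ k, k ≤ 2 → F i k = Submodule.span 𝕜 (S k)) ∧ (∀ k, S k ⊆ S 0) ∧
      LinearIndependent 𝕜 ((↑) : S 0 → M i) ∧ Submodule.span 𝕜 (S 0) = ⊤ := by
    intro i
    obtain ⟨s2, hs2W, hs2span, hs2ind⟩ := exists_linearIndependent 𝕜 (↑(F i 2) : Set (M i))
    replace hs2ind : LinearIndepOn 𝕜 id s2 := hs2ind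
    rw [Submodule.span_eq] at hs2span
    have h21 : s2 ⊆ ↑(F i 1) := hs2W.trans (hF i (by norm_num))
    have hs1ind := hs2ind.linearIndepOn_extend h21
    have hs1span : Submodule.span 𝕜 (hs2ind.extend h21) = F i 1 := by
      rw [hs2ind.span_extend_eq_span h21, Submodule.span_eq]
    have hs12 : s2 ⊆ hs2ind.extend h21 := hs2ind.subset_extend h21
    have hs0ind := hs1ind.linearIndepOn_extend (Set.subset_univ _)
    have hs0span : Submodule.span 𝕜 (hs1ind.extend (Set.subset_univ _)) = ⊤ := by
      rw [hs1ind.span_extend_eq_span, Submodule.span_univ]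
    have hs01 : hs2ind.extend h21 ⊆ hs1ind.extend (Set.subset_univ _) :=
      hs1ind.subset_extend _
    refine ⟨fun k => if k = 0 then hs1ind.extend (Set.subset_univ _)
      else if k = 1 then hs2ind.extend h21 else s2, ?_, ?_, ?_, ?_⟩
    · intro k hk
      interval_cases k
      · simpa [hF0 i] using hs0span.symm
      · simpa using hs1span.symm
      · simpa using hs2span.symm
    · intro k
      simp only [if_pos rfl]
      split_ifs with h1 h2
      · exact subset_rfl
      · exact hs01
      · exact hs12.trans hs01
    · simpa using hs0ind.linearIndependent
    · simpa using hs0span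
  choose S hSspan hSsub hSind hStop using hexists
  -- Step 2: bases adapted to the filtrations
  let ι : Fin f → Type _ := fun i => ↥(S i 0)
  let b : ∀ i, Module.Basis (ι i) 𝕜 (M i) := fun i => Module.Basis.mk (hSind i)
    (by rw [Subtype.range_coe]; exact (hStop i).ge)
  have hb : ∀ i, ⇑(b i) = ((↑) : ι i → M i) := fun i => funext fun j => Module.Basis.mk_apply _ _ j
  let v : (∀ i, ι i) → ⨂[𝕜] i, M i := fun x => PiTensorProduct.tprod 𝕜 fun i => b i (x i)
  have hv : LinearIndependent 𝕜 v := li_tprod 𝕜 M b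
  let T : (Fin f → ℕ) → Set (∀ i, ι i) :=
    fun k => {x | ∀ i, x i ∈ ((↑) : ι i → M i) ⁻¹' S i (k i)}
  have himg : ∀ (i : Fin f) (k : ℕ), b i '' (((↑) : ι i → M i) ⁻¹' S i k) = S i k := by
    intro i k
    rw [hb i, Set.image_preimage_eq_inter_range, Subtype.range_coe]
    exact Set.inter_eq_self_of_subset_left (hSsub i k)
  have hfil : ∀ k : Fin f → ℕ, (∀ i, k i ≤ 2) →
      filT 𝕜 M F k = Submodule.span 𝕜 (v '' T k) := by
    intro k hk
    refine filT_eq_span 𝕜 M F k (fun i => ⇑(b i))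
      (fun i => ((↑) : ι i → M i) ⁻¹' S i (k i)) ?_
    intro i
    rw [himg i (k i)]
    exact hSspan i (k i) (hk i)
  -- Step 3: sums of `filT` as spans over unions
  have hsup : ∀ (J : Finset (Fin f → ℕ)), (∀ k ∈ J, ∀ i, k i ≤ 2) →
      (J.sup fun k => filT 𝕜 M F k) = Submodule.span 𝕜 (v '' ⋃ k ∈ J, T k) := by
    intro J hJ
    rw [Set.image_iUnion₂, Submodule.span_iUnion₂, Finset.sup_eq_iSup]
    exact iSup_congr fun k => iSup_congr fun hk => hfil k (hJ k hk)
  have hRHS : ((I ×ˢ I').sup fun kk => filT 𝕜 M F kk.1 ⊓ filT 𝕜 M F kk.2) =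
      Submodule.span 𝕜 (v '' ⋃ kk ∈ I ×ˢ I', (T kk.1 ∩ T kk.2)) := by
    rw [Set.image_iUnion₂, Submodule.span_iUnion₂, Finset.sup_eq_iSup]
    refine iSup_congr fun kk => iSup_congr fun hkk => ?_
    rw [hfil kk.1 (hI _ (Finset.mem_product.mp hkk).1),
      hfil kk.2 (hI' _ (Finset.mem_product.mp hkk).2), span_image_inf 𝕜 hv]
  have hset : ((⋃ k ∈ I, T k) ∩ ⋃ k ∈ I', T k) = ⋃ kk ∈ I ×ˢ I', (T kk.1 ∩ T kk.2) := by
    ext x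
    simp only [Set.mem_inter_iff, Set.mem_iUnion, Finset.mem_product, exists_prop, Prod.exists]
    constructor
    · rintro ⟨⟨k, hk, hxk⟩, ⟨k', hk', hxk'⟩⟩
      exact ⟨k, k', ⟨hk, hk'⟩, hxk, hxk'⟩
    · rintro ⟨k, k', ⟨hk, hk'⟩, hxk, hxk'⟩
      exact ⟨⟨k, hk, hxk⟩, ⟨k', hk', hxk'⟩⟩
  rw [hsup I hI, hsup I' hI', span_image_inf 𝕜 hv, hRHS, hset]

end TensorFil11
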